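/- Positivity of the homogeneous first-order well-balanced update (Lemma 3.1): let Ū_{j−1}, Ū_j, Ū_{j+1} ∈ G, let p̄^e_{j−1}, p̄^e_j, p̄^e_{j+1} > 0 and p^{e,⋆}_{j−1/2}, p^{e,⋆}_{j+1/2} > 0, and define the modified HLLC fluxes F̂_{j+1/2} = F^hllc((p^{e,⋆}_{j+1/2}/p̄^e_j) Ū_j, (p^{e,⋆}_{j+1/2}/p̄^e_{j+1}) Ū_{j+1}) and F̂_{j−1/2} = F^hllc((p^{e,⋆}_{j−1/2}/p̄^e_{j−1}) Ū_{j−1}, (p^{e,⋆}_{j−1/2}/p̄^e_j) Ū_j). If Δt > 0 and h > 0 satisfy (Δt/h) · ((p^{e,⋆}_{j+1/2} + p^{e,⋆}_{j−1/2})/p̄^e_j) · max{α_max(Ū_{j−1}), α_max(Ū_j), α_max(Ū_{j+1})} ≤ 1/2, then Ū_j − (Δt/h)(F̂_{j+1/2} − F̂_{j−1/2}) ∈ G. -/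

import Mathlib

noncomputable section

/-- A 1D state `U = (ρ, m, E)`. -/
abbrev St : Type := ℝ × ℝ × ℝ

/-- The admissible set `G = {(ρ, m, E) : ρ > 0, E − m²/(2ρ) > 0}`. -/
def admG : Set St := {U | 0 < U.1 ∧ 0 < U.2.2 - U.2.1 ^ 2 / (2 * U.1)}

/-- The velocity `u = m/ρ`. -/
def vel (U : St) : ℝ := U.2.1 / U.1

/-- The pressure `p = (γ−1)(E − m²/(2ρ))`. -/
def press (γ : ℝ) (U : St) : ℝ := (γ - 1) * (U.2.2 - U.2.1 ^ 2 / (2 * U.1))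

/-- The sound speed `√(γ p / ρ)`. -/
def sound (γ : ℝ) (U : St) : ℝ := Real.sqrt (γ * press γ U / U.1)

/-- The specific internal energy `e = (E − m²/(2ρ))/ρ`. -/
def specE (U : St) : ℝ := (U.2.2 - U.2.1 ^ 2 / (2 * U.1)) / U.1

/-- The Euler flux `F(U) = (ρu, ρu² + p, (E+p)u)`. -/
def eulerF (γ : ℝ) (U : St) : St :=
  (U.1 * vel U, U.1 * vel U ^ 2 + press γ U, (U.2.2 + press γ U) * vel U)

/-- `α₋(U) = u − √(γp/ρ)`. -/
def alphaMinus (γ : ℝ) (U : St) : ℝ := vel U - sound γ U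

/-- `α₊(U) = u + √(γp/ρ)`. -/
def alphaPlus (γ : ℝ) (U : St) : ℝ := vel U + sound γ U

/-- `α_max(U) = |u| + √(γp/ρ)`. -/
def alphaMax (γ : ℝ) (U : St) : ℝ := |vel U| + sound γ U

/-- Left wave speed `S_L = min(α₋(U_L), α₋(U_R))`. -/
def SL (γ : ℝ) (UL UR : St) : ℝ := min (alphaMinus γ UL) (alphaMinus γ UR)

/-- Right wave speed `S_R = max(α₊(U_L), α₊(U_R))`. -/
def SR (γ : ℝ) (UL UR : St) : ℝ := max (alphaPlus γ UL) (alphaPlus γ UR)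

/-- Middle wave speed `S_*`. -/
def Sstar (γ : ℝ) (UL UR : St) : ℝ :=
  (press γ UR - press γ UL + UL.1 * vel UL * (SL γ UL UR - vel UL)
      - UR.1 * vel UR * (SR γ UL UR - vel UR)) /
    (UL.1 * (SL γ UL UR - vel UL) - UR.1 * (SR γ UL UR - vel UR))

/-- HLLC intermediate state
`U_{*i} = ρ_i (S_i − u_i)/(S_i − S_*) · (1, S_*, E_i/ρ_i + (S_* − u_i)(S_* + p_i/(ρ_i(S_i − u_i))))`. -/
def Ustar (γ : ℝ) (Si Sst : ℝ) (Ui : St) : St :=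
  (Ui.1 * ((Si - vel Ui) / (Si - Sst))) •
    (((1 : ℝ), Sst,
      Ui.2.2 / Ui.1 + (Sst - vel Ui) * (Sst + press γ Ui / (Ui.1 * (Si - vel Ui)))) : St)

/-- Intermediate flux `F_{*i} = F(U_i) + S_i (U_{*i} − U_i)`. -/
def Fstar (γ : ℝ) (Si Sst : ℝ) (Ui : St) : St :=
  eulerF γ Ui + Si • (Ustar γ Si Sst Ui - Ui)

/-- The HLLC numerical flux. -/
def Fhllc (γ : ℝ) (UL UR : St) : St :=
  if 0 ≤ SL γ UL UR then eulerF γ UL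
  else if 0 ≤ Sstar γ UL UR then Fstar γ (SL γ UL UR) (Sstar γ UL UR) UL
  else if 0 ≤ SR γ UL UR then Fstar γ (SR γ UL UR) (Sstar γ UL UR) UR
  else eulerF γ UR

end

section Lemmas
-- component simp lemmas
@[simp] lemma St.smul_1 (a : ℝ) (U : St) : (a • U).1 = a * U.1 := rfl
@[simp] lemma St.smul_21 (a : ℝ) (U : St) : (a • U).2.1 = a * U.2.1 := rfl
@[simp] lemma St.smul_22 (a : ℝ) (U : St) : (a • U).2.2 = a * U.2.2 := rfl
@[simp] lemma St.add_1 (U V : St) : (U + V).1 = U.1 + V.1 := rfl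
@[simp] lemma St.add_21 (U V : St) : (U + V).2.1 = U.2.1 + V.2.1 := rfl
@[simp] lemma St.add_22 (U V : St) : (U + V).2.2 = U.2.2 + V.2.2 := rfl
@[simp] lemma St.sub_1 (U V : St) : (U - V).1 = U.1 - V.1 := rfl
@[simp] lemma St.sub_21 (U V : St) : (U - V).2.1 = U.2.1 - V.2.1 := rfl
@[simp] lemma St.sub_22 (U V : St) : (U - V).2.2 = U.2.2 - V.2.2 := rfl

lemma admG_iff (U : St) : U ∈ admG ↔ 0 < U.1 ∧ 0 < 2 * U.1 * U.2.2 - U.2.1 ^ 2 := by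
  unfold admG
  simp only [Set.mem_setOf_eq]
  constructor
  · rintro ⟨h1, h2⟩
    refine ⟨h1, ?_⟩
    have key : U.2.2 - U.2.1 ^ 2 / (2 * U.1) = (2 * U.1 * U.2.2 - U.2.1 ^ 2) / (2 * U.1) := by
      field_simp
    rw [key] at h2
    have h3 : (0:ℝ) < 2 * U.1 := by linarith
    rcases div_pos_iff.mp h2 with ⟨h,_⟩|⟨_,h⟩ <;> linarith
  · rintro ⟨h1, h2⟩
    refine ⟨h1, ?_⟩
    have key : U.2.2 - U.2.1 ^ 2 / (2 * U.1) = (2 * U.1 * U.2.2 - U.2.1 ^ 2) / (2 * U.1) := by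
      field_simp
    rw [key]
    positivity

lemma admG_smul {a : ℝ} {U : St} (ha : 0 < a) (hU : U ∈ admG) : a • U ∈ admG := by
  rw [admG_iff] at *
  obtain ⟨h1, h2⟩ := hU
  refine ⟨mul_pos ha h1, ?_⟩
  simp only [St.smul_1, St.smul_21, St.smul_22]
  nlinarith [mul_pos (mul_pos ha ha) h2]

lemma admG_add {U V : St} (hU : U ∈ admG) (hV : V ∈ admG) : U + V ∈ admG := by
  rw [admG_iff] at *
  obtain ⟨h1, h2⟩ := hU
  obtain ⟨h3, h4⟩ := hV
  simp only [St.add_1, St.add_21, St.add_22]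
  refine ⟨by linarith, ?_⟩
  nlinarith [sq_nonneg (U.1 * V.2.1 - V.1 * U.2.1), mul_pos (mul_pos h1 h1) h4,
    mul_pos (mul_pos h3 h3) h2, mul_pos h1 h3]

lemma admG_combo2 {a b : ℝ} {U V : St} (ha : 0 ≤ a) (hb : 0 ≤ b) (hab : 0 < a + b)
    (hU : U ∈ admG) (hV : V ∈ admG) : a • U + b • V ∈ admG := by
  rcases ha.eq_or_lt with h | h
  · have hb' : 0 < b := by linarith
    simpa [← h] using admG_smul hb' hV
  · rcases hb.eq_or_lt with h2 | h2
    · simpa [← h2] using admG_smul h hU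
    · exact admG_add (admG_smul h hU) (admG_smul h2 hV)

lemma admG_combo3 {a b c : ℝ} {U V W : St} (ha : 0 ≤ a) (hb : 0 ≤ b) (hc : 0 ≤ c)
    (habc : 0 < a + b + c) (hU : U ∈ admG) (hV : V ∈ admG) (hW : W ∈ admG) :
    a • U + b • V + c • W ∈ admG := by
  rcases hc.eq_or_lt with h | h
  · simpa [← h] using admG_combo2 ha hb (by linarith) hU hV
  · rcases (add_nonneg ha hb).eq_or_lt with h2 | h2
    · have ha0 : a = 0 := by linarith
      have hb0 : b = 0 := by linarith
      simpa [ha0, hb0] using admG_smul h hW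
    · exact admG_add (admG_combo2 ha hb h2 hU hV) (admG_smul h hW)

lemma admG_combo4 {a b c d : ℝ} {U V W X : St} (ha : 0 ≤ a) (hb : 0 ≤ b) (hc : 0 ≤ c)
    (hd : 0 ≤ d) (habcd : 0 < a + b + c + d) (hU : U ∈ admG) (hV : V ∈ admG)
    (hW : W ∈ admG) (hX : X ∈ admG) : a • U + b • V + c • W + d • X ∈ admG := by
  rcases hd.eq_or_lt with h | h
  · simpa [← h] using admG_combo3 ha hb hc (by linarith) hU hV hW
  · rcases (add_nonneg (add_nonneg ha hb) hc).eq_or_lt with h2 | h2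
    · have ha0 : a = 0 := by linarith
      have hb0 : b = 0 := by linarith
      have hc0 : c = 0 := by linarith
      simpa [ha0, hb0, hc0] using admG_smul h hX
    · exact admG_add (admG_combo3 ha hb hc h2 hU hV hW) (admG_smul h hX)

-- basic facts for admissible states
lemma rho_pos {U : St} (hU : U ∈ admG) : 0 < U.1 := hU.1

lemma press_pos {γ : ℝ} (hγ : 1 < γ) {U : St} (hU : U ∈ admG) : 0 < press γ U :=
  mul_pos (by linarith) hU.2

lemma sound_sq {γ : ℝ} (hγ : 1 < γ) {U : St} (hU : U ∈ admG) :
    U.1 * sound γ U ^ 2 = γ * press γ U := by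
  have h1 : 0 ≤ γ * press γ U / U.1 :=
    le_of_lt (div_pos (mul_pos (by linarith) (press_pos hγ hU)) hU.1)
  rw [sound, Real.sq_sqrt h1]
  field_simp [ne_of_gt (rho_pos hU)]

lemma sound_pos {γ : ℝ} (hγ : 1 < γ) {U : St} (hU : U ∈ admG) : 0 < sound γ U :=
  Real.sqrt_pos.mpr (div_pos (mul_pos (by linarith) (press_pos hγ hU)) hU.1)
end Lemmas


section Lemmas2

variable {γ : ℝ}

lemma vel_smul {c : ℝ} (hc : c ≠ 0) (U : St) : vel (c • U) = vel U := by
  unfold vel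
  simp only [St.smul_1, St.smul_21]
  rw [mul_div_mul_left _ _ hc]

lemma press_smul {c : ℝ} (hc : c ≠ 0) {U : St} (hr : U.1 ≠ 0) :
    press γ (c • U) = c * press γ U := by
  unfold press
  simp only [St.smul_1, St.smul_21, St.smul_22]
  field_simp

lemma sound_smul {c : ℝ} (hc : c ≠ 0) {U : St} (hr : U.1 ≠ 0) :
    sound γ (c • U) = sound γ U := by
  unfold sound
  rw [press_smul hc hr]
  simp only [St.smul_1]
  congr 1
  field_simp

lemma alphaMinus_smul {c : ℝ} (hc : c ≠ 0) {U : St} (hr : U.1 ≠ 0) :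
    alphaMinus γ (c • U) = alphaMinus γ U := by
  unfold alphaMinus; rw [vel_smul hc, sound_smul hc hr]

lemma alphaPlus_smul {c : ℝ} (hc : c ≠ 0) {U : St} (hr : U.1 ≠ 0) :
    alphaPlus γ (c • U) = alphaPlus γ U := by
  unfold alphaPlus; rw [vel_smul hc, sound_smul hc hr]

lemma eulerF_smul {c : ℝ} (hc : c ≠ 0) {U : St} (hr : U.1 ≠ 0) :
    eulerF γ (c • U) = c • eulerF γ U := by
  unfold eulerF
  rw [vel_smul hc, press_smul hc hr]
  simp only [St.smul_1, St.smul_22, Prod.smul_mk, smul_eq_mul]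
  refine Prod.ext ?_ (Prod.ext ?_ ?_) <;> simp <;> ring

lemma sound_nonneg (U : St) : 0 ≤ sound γ U := Real.sqrt_nonneg _

lemma alphaMax_nonneg (U : St) : 0 ≤ alphaMax γ U :=
  add_nonneg (abs_nonneg _) (sound_nonneg U)

lemma neg_alphaMax_le_alphaMinus (U : St) : -alphaMax γ U ≤ alphaMinus γ U := by
  unfold alphaMax alphaMinus
  have h1 : -|vel U| ≤ vel U := neg_abs_le _
  have h2 : 0 ≤ sound γ U := sound_nonneg U
  linarith

lemma alphaPlus_le_alphaMax (U : St) : alphaPlus γ U ≤ alphaMax γ U := by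
  unfold alphaMax alphaPlus
  have h1 : vel U ≤ |vel U| := le_abs_self _
  linarith

lemma vel_mul_rho {U : St} (hr : U.1 ≠ 0) : vel U * U.1 = U.2.1 := by
  unfold vel; field_simp

/-- Scalar version of the transport brick. -/
lemma transport_aux (γ r m E p cs u σ : ℝ) (hr : 0 < r) (hp : 0 < p) (hc : 0 < cs)
    (hA : 0 < 2 * r * E - m ^ 2) (hm : u * r = m) (hc2 : r * cs ^ 2 = γ * p)
    (hpA : 2 * r * p = (γ - 1) * (2 * r * E - m ^ 2)) (hγ : 1 < γ)
    (h2 : |σ| * cs ≤ 1 - σ * u) :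
    0 < r - σ * (r * u) ∧
      0 < 2 * (r - σ * (r * u)) * (E - σ * ((E + p) * u)) - (m - σ * (r * u ^ 2 + p)) ^ 2 := by
  have h1u : 0 < 1 - σ * u := by
    rcases eq_or_ne σ 0 with h | h
    · simp [h]
    · have : 0 < |σ| * cs := mul_pos (abs_pos.mpr h) hc
      linarith
  constructor
  · nlinarith [mul_pos hr h1u]
  · have hid : 2 * (r - σ * (r * u)) * (E - σ * ((E + p) * u)) - (m - σ * (r * u ^ 2 + p)) ^ 2 =
        (1 - σ * u) ^ 2 * (2 * r * E - m ^ 2) - σ ^ 2 * p ^ 2 := by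
      rw [← hm]; ring
    rw [hid]
    set A := 2 * r * E - m ^ 2 with hAdef
    rcases eq_or_ne σ 0 with h | h
    · rw [h]; nlinarith [hA]
    · have hσ2 : 0 < σ ^ 2 := by positivity
      have h3 : σ ^ 2 * cs ^ 2 ≤ (1 - σ * u) ^ 2 := by
        nlinarith [h2, mul_nonneg (abs_nonneg σ) hc.le, sq_abs σ, h1u]
      have e1 : σ ^ 2 * γ * p * A ≤ r * (1 - σ * u) ^ 2 * A := by
        have := mul_le_mul_of_nonneg_right (mul_le_mul_of_nonneg_left h3 hr.le) hA.le
        calc σ ^ 2 * γ * p * A = r * (σ ^ 2 * cs ^ 2) * A := by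
              rw [show r * (σ ^ 2 * cs ^ 2) * A = σ ^ 2 * (r * cs ^ 2) * A by ring, hc2]
              ring
        _ ≤ r * (1 - σ * u) ^ 2 * A := this
      have e2 : 2 * (r * (σ ^ 2 * p ^ 2)) = σ ^ 2 * γ * p * A - σ ^ 2 * p * A := by
        calc 2 * (r * (σ ^ 2 * p ^ 2)) = σ ^ 2 * p * (2 * r * p) := by ring
        _ = σ ^ 2 * p * ((γ - 1) * A) := by rw [hpA]
        _ = σ ^ 2 * γ * p * A - σ ^ 2 * p * A := by ring
      have hx : 0 < σ ^ 2 * p * A := mul_pos (mul_pos hσ2 hp) hA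
      have h6 : σ ^ 2 * p * A < σ ^ 2 * γ * p * A := by nlinarith [hx, hγ]
      have h5 : 0 < r * ((1 - σ * u) ^ 2 * A - σ ^ 2 * p ^ 2) := by
        nlinarith [e1, e2, h6, hx]
      rcases mul_pos_iff.mp h5 with ⟨_, hX⟩ | ⟨hneg, _⟩
      · exact hX
      · linarith

lemma press_rel {γ : ℝ} {U : St} (hr : 0 < U.1) :
    2 * U.1 * press γ U = (γ - 1) * (2 * U.1 * U.2.2 - U.2.1 ^ 2) := by
  unfold press
  have key : U.2.2 - U.2.1 ^ 2 / (2 * U.1) = (2 * U.1 * U.2.2 - U.2.1 ^ 2) / (2 * U.1) := by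
    field_simp
  rw [key]
  field_simp

/-- The transport brick: `U − σ F(U) ∈ G` when `|σ| α_max(U) ≤ 1`. -/
lemma admG_transport {γ : ℝ} (hγ : 1 < γ) {U : St} (hU : U ∈ admG) {σ : ℝ}
    (hσ : |σ| * alphaMax γ U ≤ 1) : U - σ • eulerF γ U ∈ admG := by
  have hr : 0 < U.1 := rho_pos hU
  have hp : 0 < press γ U := press_pos hγ hU
  have hc : 0 < sound γ U := sound_pos hγ hU
  have hm : vel U * U.1 = U.2.1 := vel_mul_rho (ne_of_gt hr)
  have hA : 0 < 2 * U.1 * U.2.2 - U.2.1 ^ 2 := ((admG_iff U).mp hU).2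
  have h2 : |σ| * sound γ U ≤ 1 - σ * vel U := by
    have hσu : σ * vel U ≤ |σ| * |vel U| := by
      calc σ * vel U ≤ |σ * vel U| := le_abs_self _
      _ = |σ| * |vel U| := abs_mul σ (vel U)
    have hsum : |σ| * |vel U| + |σ| * sound γ U ≤ 1 := by
      unfold alphaMax at hσ
      nlinarith [hσ]
    linarith
  obtain ⟨g1, g2⟩ := transport_aux γ U.1 U.2.1 U.2.2 (press γ U) (sound γ U) (vel U) σ
    hr hp hc hA hm (sound_sq hγ hU) (press_rel hr) hγ h2
  rw [admG_iff]
  exact ⟨g1, g2⟩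

end Lemmas2


section Lemmas3

variable {γ : ℝ}

lemma SL_le_L (UL UR : St) : SL γ UL UR ≤ vel UL - sound γ UL := min_le_left _ _
lemma SL_le_R (UL UR : St) : SL γ UL UR ≤ vel UR - sound γ UR := min_le_right _ _
lemma SR_ge_L (UL UR : St) : vel UL + sound γ UL ≤ SR γ UL UR := le_max_left _ _
lemma SR_ge_R (UL UR : St) : vel UR + sound γ UR ≤ SR γ UL UR := le_max_right _ _

lemma SL_lt_velL (hγ : 1 < γ) {UL UR : St} (hL : UL ∈ admG) : SL γ UL UR < vel UL :=
  lt_of_le_of_lt (SL_le_L UL UR) (by linarith [sound_pos hγ hL])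

lemma velR_lt_SR (hγ : 1 < γ) {UL UR : St} (hR : UR ∈ admG) : vel UR < SR γ UL UR :=
  lt_of_lt_of_le (by linarith [sound_pos hγ hR]) (SR_ge_R UL UR)

lemma Sstar_denom_neg (hγ : 1 < γ) {UL UR : St} (hL : UL ∈ admG) (hR : UR ∈ admG) :
    UL.1 * (SL γ UL UR - vel UL) - UR.1 * (SR γ UL UR - vel UR) < 0 := by
  have h1 := SL_lt_velL hγ hL (UR := UR)
  have h2 := velR_lt_SR hγ hR (UL := UL)
  have h3 := rho_pos hL
  have h4 := rho_pos hR
  nlinarith [mul_pos h3 (sub_pos.mpr h1), mul_pos h4 (sub_pos.mpr h2)]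

/-- Scalar lemma: `N − S_L·D < 0`. -/
lemma Sstar_lower_aux (γ rL uL pL cL rR uR pR cR S_L S_R : ℝ)
    (hrL : 0 < rL) (hrR : 0 < rR) (hpL : 0 < pL) (hpR : 0 < pR) (hcL : 0 < cL) (hcR : 0 < cR)
    (hcl2 : rL * cL ^ 2 = γ * pL) (hcr2 : rR * cR ^ 2 = γ * pR)
    (h1 : S_L ≤ uL - cL) (h2 : S_L ≤ uR - cR) (h3 : uR + cR ≤ S_R) (hγ : 1 < γ) :
    pR - pL + rL * uL * (S_L - uL) - rR * uR * (S_R - uR) <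
      S_L * (rL * (S_L - uL) - rR * (S_R - uR)) := by
  have P1 : cL * cL ≤ (uL - S_L) * (uL - S_L) :=
    mul_le_mul (by linarith) (by linarith) hcL.le (by linarith)
  have P2 : cR * cR ≤ (S_R - uR) * (uR - S_L) :=
    mul_le_mul (by linarith) (by linarith) hcR.le (by linarith)
  nlinarith [mul_le_mul_of_nonneg_left P1 hrL.le, mul_le_mul_of_nonneg_left P2 hrR.le,
    hcl2, hcr2, hpL, hpR, hγ]

/-- Scalar lemma: `N − S_R·D > 0`. -/
lemma Sstar_upper_aux (γ rL uL pL cL rR uR pR cR S_L S_R : ℝ)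
    (hrL : 0 < rL) (hrR : 0 < rR) (hpL : 0 < pL) (hpR : 0 < pR) (hcL : 0 < cL) (hcR : 0 < cR)
    (hcl2 : rL * cL ^ 2 = γ * pL) (hcr2 : rR * cR ^ 2 = γ * pR)
    (h1 : S_L ≤ uL - cL) (h3 : uR + cR ≤ S_R) (h4 : uL + cL ≤ S_R) (hγ : 1 < γ) :
    S_R * (rL * (S_L - uL) - rR * (S_R - uR)) <
      pR - pL + rL * uL * (S_L - uL) - rR * uR * (S_R - uR) := by
  have Q1 : cL * cL ≤ (uL - S_L) * (S_R - uL) :=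
    mul_le_mul (by linarith) (by linarith) hcL.le (by linarith)
  have Q2 : cR * cR ≤ (S_R - uR) * (S_R - uR) :=
    mul_le_mul (by linarith) (by linarith) hcR.le (by linarith)
  nlinarith [mul_le_mul_of_nonneg_left Q1 hrL.le, mul_le_mul_of_nonneg_left Q2 hrR.le,
    hcl2, hcr2, hpL, hpR, hγ]

lemma SL_lt_Sstar (hγ : 1 < γ) {UL UR : St} (hL : UL ∈ admG) (hR : UR ∈ admG) :
    SL γ UL UR < Sstar γ UL UR := by
  have hD := Sstar_denom_neg hγ hL hR (γ := γ) (UL := UL) (UR := UR)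
  rw [Sstar, lt_div_iff_of_neg hD]
  exact Sstar_lower_aux γ UL.1 (vel UL) (press γ UL) (sound γ UL) UR.1 (vel UR) (press γ UR)
    (sound γ UR) (SL γ UL UR) (SR γ UL UR) (rho_pos hL) (rho_pos hR) (press_pos hγ hL)
    (press_pos hγ hR) (sound_pos hγ hL) (sound_pos hγ hR) (sound_sq hγ hL) (sound_sq hγ hR)
    (by linarith [SL_le_L (γ := γ) UL UR]) (by linarith [SL_le_R (γ := γ) UL UR])
    (by linarith [SR_ge_R (γ := γ) UL UR]) hγ

lemma Sstar_lt_SR (hγ : 1 < γ) {UL UR : St} (hL : UL ∈ admG) (hR : UR ∈ admG) :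
    Sstar γ UL UR < SR γ UL UR := by
  have hD := Sstar_denom_neg hγ hL hR (γ := γ) (UL := UL) (UR := UR)
  rw [Sstar, div_lt_iff_of_neg hD]
  exact Sstar_upper_aux γ UL.1 (vel UL) (press γ UL) (sound γ UL) UR.1 (vel UR) (press γ UR)
    (sound γ UR) (SL γ UL UR) (SR γ UL UR) (rho_pos hL) (rho_pos hR) (press_pos hγ hL)
    (press_pos hγ hR) (sound_pos hγ hL) (sound_pos hγ hR) (sound_sq hγ hL) (sound_sq hγ hR)
    (by linarith [SL_le_L (γ := γ) UL UR]) (by linarith [SR_ge_R (γ := γ) UL UR])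
    (by linarith [SR_ge_L (γ := γ) UL UR]) hγ

/-- Scalar core for admissibility of the star states. -/
lemma ustar_num_aux (γ r m E p d y : ℝ) (hp : 0 < p) (hA : 0 < 2 * r * E - m ^ 2)
    (hpA : 2 * r * p = (γ - 1) * (2 * r * E - m ^ 2)) (hγ : 1 < γ)
    (hd2 : γ * p ≤ d ^ 2 * r) (hr : 0 < r) :
    0 < d ^ 2 * (2 * r * E - m ^ 2) + y ^ 2 - p ^ 2 := by
  have hkey : 0 < d ^ 2 * (2 * r * E - m ^ 2) - p ^ 2 := by
    nlinarith [mul_le_mul_of_nonneg_right hd2 hA.le, mul_pos hp hA, hr, hp, hA, hγ]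
  nlinarith [sq_nonneg y, hkey]

/-- Admissibility of an HLLC intermediate state. -/
lemma Ustar_mem (hγ : 1 < γ) {U : St} (hU : U ∈ admG) (Si x : ℝ)
    (hd2 : γ * press γ U ≤ (Si - vel U) ^ 2 * U.1)
    (hq : 0 < (Si - vel U) / (Si - x)) :
    Ustar γ Si x U ∈ admG := by
  have hr : 0 < U.1 := rho_pos hU
  have hp : 0 < press γ U := press_pos hγ hU
  have hA : 0 < 2 * U.1 * U.2.2 - U.2.1 ^ 2 := ((admG_iff U).mp hU).2
  have hd : Si - vel U ≠ 0 := by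
    intro h
    rw [h] at hd2
    nlinarith [hd2, hp, hγ]
  have hm : vel U * U.1 = U.2.1 := vel_mul_rho (ne_of_gt hr)
  rw [admG_iff]
  constructor
  · show 0 < U.1 * ((Si - vel U) / (Si - x)) * 1
    rw [mul_one]
    exact mul_pos hr hq
  · show 0 < 2 * (U.1 * ((Si - vel U) / (Si - x)) * 1) *
        (U.1 * ((Si - vel U) / (Si - x)) *
          (U.2.2 / U.1 + (x - vel U) * (x + press γ U / (U.1 * (Si - vel U))))) -
        (U.1 * ((Si - vel U) / (Si - x)) * x) ^ 2
    have hq' : U.1 * ((Si - vel U) / (Si - x)) > 0 := mul_pos hr hq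
    have hB : 0 < 2 * (U.2.2 / U.1 + (x - vel U) * (x + press γ U / (U.1 * (Si - vel U)))) -
        x ^ 2 := by
      have hid : 2 * (U.2.2 / U.1 + (x - vel U) * (x + press γ U / (U.1 * (Si - vel U)))) -
          x ^ 2 =
          ((Si - vel U) ^ 2 * (2 * U.1 * U.2.2 - U.2.1 ^ 2) +
            ((x - vel U) * U.1 * (Si - vel U) + press γ U) ^ 2 - press γ U ^ 2) /
          (U.1 ^ 2 * (Si - vel U) ^ 2) := by
        rw [← hm]
        field_simp
        ring
      rw [hid]
      apply div_pos
      · exact ustar_num_aux γ U.1 U.2.1 U.2.2 (press γ U) (Si - vel U)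
          ((x - vel U) * U.1 * (Si - vel U) + press γ U) hp hA (press_rel hr) hγ
          (by nlinarith [hd2]) hr
      · positivity
    nlinarith [mul_pos (mul_pos hq' hq') hB]

end Lemmas3


section Lemmas4

variable {γ : ℝ}

/-- The HLLC contact-wave consistency identity `F_{*R} = F_{*L} + S_*(U_{*R} − U_{*L})`. -/
lemma star_flux_rel (γ : ℝ) (UL UR : St) (hrL : UL.1 ≠ 0) (hrR : UR.1 ≠ 0)
    (hdL : SL γ UL UR - vel UL ≠ 0) (hdR : SR γ UL UR - vel UR ≠ 0)
    (hsL : SL γ UL UR - Sstar γ UL UR ≠ 0) (hsR : SR γ UL UR - Sstar γ UL UR ≠ 0)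
    (hD : UL.1 * (SL γ UL UR - vel UL) - UR.1 * (SR γ UL UR - vel UR) ≠ 0) :
    Fstar γ (SR γ UL UR) (Sstar γ UL UR) UR =
      Fstar γ (SL γ UL UR) (Sstar γ UL UR) UL
        + Sstar γ UL UR • (Ustar γ (SR γ UL UR) (Sstar γ UL UR) UR
            - Ustar γ (SL γ UL UR) (Sstar γ UL UR) UL) := by
  have hs : Sstar γ UL UR * (UL.1 * (SL γ UL UR - vel UL) - UR.1 * (SR γ UL UR - vel UR)) =
      press γ UR - press γ UL + UL.1 * vel UL * (SL γ UL UR - vel UL)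
        - UR.1 * vel UR * (SR γ UL UR - vel UR) := by
    rw [Sstar]
    exact div_mul_cancel₀ _ hD
  obtain ⟨s, hsdef⟩ : ∃ x, Sstar γ UL UR = x := ⟨_, rfl⟩
  obtain ⟨S_L, hSL⟩ : ∃ x, SL γ UL UR = x := ⟨_, rfl⟩
  obtain ⟨S_R, hSR⟩ : ∃ x, SR γ UL UR = x := ⟨_, rfl⟩
  rw [hsdef] at hs hsL hsR ⊢
  rw [hSL] at hs hdL hsL ⊢
  rw [hSR] at hs hdR hsR ⊢
  -- atoms with defining relations
  have hkL : UL.1 * ((S_L - vel UL) / (S_L - s)) * (S_L - s) = UL.1 * (S_L - vel UL) := by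
    rw [mul_assoc, div_mul_cancel₀ _ hsL]
  have hkR : UR.1 * ((S_R - vel UR) / (S_R - s)) * (S_R - s) = UR.1 * (S_R - vel UR) := by
    rw [mul_assoc, div_mul_cancel₀ _ hsR]
  have hwL : press γ UL / (UL.1 * (S_L - vel UL)) * (UL.1 * (S_L - vel UL)) = press γ UL :=
    div_mul_cancel₀ _ (mul_ne_zero hrL hdL)
  have hwR : press γ UR / (UR.1 * (S_R - vel UR)) * (UR.1 * (S_R - vel UR)) = press γ UR :=
    div_mul_cancel₀ _ (mul_ne_zero hrR hdR)
  have heL : UL.2.2 / UL.1 * UL.1 = UL.2.2 := div_mul_cancel₀ _ hrL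
  have heR : UR.2.2 / UR.1 * UR.1 = UR.2.2 := div_mul_cancel₀ _ hrR
  unfold Fstar Ustar eulerF
  refine Prod.ext ?_ (Prod.ext ?_ ?_)
  · show UR.1 * vel UR + S_R * (UR.1 * ((S_R - vel UR) / (S_R - s)) * 1 - UR.1) =
      UL.1 * vel UL + S_L * (UL.1 * ((S_L - vel UL) / (S_L - s)) * 1 - UL.1)
        + s * (UR.1 * ((S_R - vel UR) / (S_R - s)) * 1 - UL.1 * ((S_L - vel UL) / (S_L - s)) * 1)
    linear_combination hkR - hkL
  · show UR.1 * vel UR ^ 2 + press γ UR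
        + S_R * (UR.1 * ((S_R - vel UR) / (S_R - s)) * s - UR.2.1) =
      UL.1 * vel UL ^ 2 + press γ UL
        + S_L * (UL.1 * ((S_L - vel UL) / (S_L - s)) * s - UL.2.1)
        + s * (UR.1 * ((S_R - vel UR) / (S_R - s)) * s - UL.1 * ((S_L - vel UL) / (S_L - s)) * s)
    have hmL : vel UL * UL.1 = UL.2.1 := vel_mul_rho hrL
    have hmR : vel UR * UR.1 = UR.2.1 := vel_mul_rho hrR
    linear_combination s * hkR - s * hkL - hs + S_R * hmR - S_L * hmL
  · show (UR.2.2 + press γ UR) * vel UR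
        + S_R * (UR.1 * ((S_R - vel UR) / (S_R - s)) *
            (UR.2.2 / UR.1 + (s - vel UR) * (s + press γ UR / (UR.1 * (S_R - vel UR)))) - UR.2.2) =
      (UL.2.2 + press γ UL) * vel UL
        + S_L * (UL.1 * ((S_L - vel UL) / (S_L - s)) *
            (UL.2.2 / UL.1 + (s - vel UL) * (s + press γ UL / (UL.1 * (S_L - vel UL)))) - UL.2.2)
        + s * (UR.1 * ((S_R - vel UR) / (S_R - s)) *
              (UR.2.2 / UR.1 + (s - vel UR) * (s + press γ UR / (UR.1 * (S_R - vel UR))))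
            - UL.1 * ((S_L - vel UL) / (S_L - s)) *
              (UL.2.2 / UL.1 + (s - vel UL) * (s + press γ UL / (UL.1 * (S_L - vel UL)))))
    linear_combination
      (UR.2.2 / UR.1 + (s - vel UR) * (s + press γ UR / (UR.1 * (S_R - vel UR)))) * hkR
      - (UL.2.2 / UL.1 + (s - vel UL) * (s + press γ UL / (UL.1 * (S_L - vel UL)))) * hkL
      + (S_R - vel UR) * heR - (S_L - vel UL) * heL
      + (s - vel UR) * hwR - (s - vel UL) * hwL
      - s * hs
end Lemmas4


section Lemmas5

variable {γ : ℝ}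

lemma UstarL_mem (hγ : 1 < γ) {UL UR : St} (hL : UL ∈ admG) (hR : UR ∈ admG) :
    Ustar γ (SL γ UL UR) (Sstar γ UL UR) UL ∈ admG := by
  have hc := sound_pos hγ hL
  have hc2 := sound_sq hγ hL
  have h1 := SL_le_L (γ := γ) UL UR
  have h2 := SL_lt_Sstar hγ hL hR
  have h3 := SL_lt_velL hγ hL (UR := UR)
  apply Ustar_mem hγ hL
  · have hr := rho_pos hL
    nlinarith [hc2, mul_le_mul (by linarith : sound γ UL ≤ vel UL - SL γ UL UR)
      (by linarith : sound γ UL ≤ vel UL - SL γ UL UR) hc.le (by linarith), hr]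
  · exact div_pos_iff.mpr (Or.inr ⟨by linarith, by linarith⟩)

lemma UstarR_mem (hγ : 1 < γ) {UL UR : St} (hL : UL ∈ admG) (hR : UR ∈ admG) :
    Ustar γ (SR γ UL UR) (Sstar γ UL UR) UR ∈ admG := by
  have hc := sound_pos hγ hR
  have hc2 := sound_sq hγ hR
  have h1 := SR_ge_R (γ := γ) UL UR
  have h2 := Sstar_lt_SR hγ hL hR
  have h3 := velR_lt_SR hγ hR (UL := UL)
  apply Ustar_mem hγ hR
  · have hr := rho_pos hR
    nlinarith [hc2, mul_le_mul (by linarith : sound γ UR ≤ SR γ UL UR - vel UR)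
      (by linarith : sound γ UR ≤ SR γ UL UR - vel UR) hc.le (by linarith), hr]
  · exact div_pos (by linarith) (by linarith)

lemma star_flux_rel' (hγ : 1 < γ) {UL UR : St} (hL : UL ∈ admG) (hR : UR ∈ admG) :
    Fstar γ (SR γ UL UR) (Sstar γ UL UR) UR =
      Fstar γ (SL γ UL UR) (Sstar γ UL UR) UL
        + Sstar γ UL UR • (Ustar γ (SR γ UL UR) (Sstar γ UL UR) UR
            - Ustar γ (SL γ UL UR) (Sstar γ UL UR) UL) := by
  apply star_flux_rel γ UL UR (ne_of_gt (rho_pos hL)) (ne_of_gt (rho_pos hR))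
  · exact sub_ne_zero.mpr (ne_of_lt (SL_lt_velL hγ hL))
  · exact sub_ne_zero.mpr (ne_of_gt (velR_lt_SR hγ hR))
  · exact sub_ne_zero.mpr (ne_of_lt (SL_lt_Sstar hγ hL hR))
  · exact sub_ne_zero.mpr (ne_of_gt (Sstar_lt_SR hγ hL hR))
  · exact ne_of_lt (Sstar_denom_neg hγ hL hR)

/-- Left half-fan brick. -/
lemma brick_left (hγ : 1 < γ) {UL UR : St} (hL : UL ∈ admG) (hR : UR ∈ admG)
    {σ : ℝ} (hσ : 0 ≤ σ) (hbl : -1 ≤ 2 * σ * SL γ UL UR) (hbr : 2 * σ * SR γ UL UR ≤ 1) :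
    UL - (2 * σ) • (Fhllc γ UL UR - eulerF γ UL) ∈ admG := by
  have hLS := SL_lt_Sstar hγ hL hR
  have hRS := Sstar_lt_SR hγ hL hR
  have hUsL := UstarL_mem hγ hL hR
  have hUsR := UstarR_mem hγ hL hR
  rw [Fhllc]
  split_ifs with h1 h2 h3
  · simpa using hL
  · have hSL0 : SL γ UL UR < 0 := lt_of_not_ge h1
    have key : UL - (2 * σ) • (Fstar γ (SL γ UL UR) (Sstar γ UL UR) UL - eulerF γ UL) =
        (1 + 2 * σ * SL γ UL UR) • UL
          + (-(2 * σ * SL γ UL UR)) • Ustar γ (SL γ UL UR) (Sstar γ UL UR) UL := by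
      unfold Fstar; module
    rw [key]
    exact admG_combo2 (by linarith) (by nlinarith) (by linarith) hL hUsL
  · have hSL0 : SL γ UL UR < 0 := lt_of_not_ge h1
    have hSst0 : Sstar γ UL UR < 0 := lt_of_not_ge h2
    rw [star_flux_rel' hγ hL hR]
    have key : UL - (2 * σ) • (Fstar γ (SL γ UL UR) (Sstar γ UL UR) UL
          + Sstar γ UL UR • (Ustar γ (SR γ UL UR) (Sstar γ UL UR) UR
            - Ustar γ (SL γ UL UR) (Sstar γ UL UR) UL) - eulerF γ UL) =
        (1 + 2 * σ * SL γ UL UR) • UL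
          + (2 * σ * (Sstar γ UL UR - SL γ UL UR)) • Ustar γ (SL γ UL UR) (Sstar γ UL UR) UL
          + (-(2 * σ * Sstar γ UL UR)) • Ustar γ (SR γ UL UR) (Sstar γ UL UR) UR := by
      unfold Fstar; module
    rw [key]
    exact admG_combo3 (by linarith) (by nlinarith) (by nlinarith) (by linarith) hL hUsL hUsR
  · have hSL0 : SL γ UL UR < 0 := lt_of_not_ge h1
    have hSst0 : Sstar γ UL UR < 0 := lt_of_not_ge h2
    have hSR0 : SR γ UL UR < 0 := lt_of_not_ge h3
    have hFR : eulerF γ UR = Fstar γ (SL γ UL UR) (Sstar γ UL UR) UL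
        + Sstar γ UL UR • (Ustar γ (SR γ UL UR) (Sstar γ UL UR) UR
          - Ustar γ (SL γ UL UR) (Sstar γ UL UR) UL)
        - SR γ UL UR • (Ustar γ (SR γ UL UR) (Sstar γ UL UR) UR - UR) := by
      rw [← star_flux_rel' hγ hL hR]; unfold Fstar; module
    rw [hFR]
    have key : UL - (2 * σ) • (Fstar γ (SL γ UL UR) (Sstar γ UL UR) UL
          + Sstar γ UL UR • (Ustar γ (SR γ UL UR) (Sstar γ UL UR) UR
            - Ustar γ (SL γ UL UR) (Sstar γ UL UR) UL)
          - SR γ UL UR • (Ustar γ (SR γ UL UR) (Sstar γ UL UR) UR - UR) - eulerF γ UL) =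
        (1 + 2 * σ * SL γ UL UR) • UL
          + (2 * σ * (Sstar γ UL UR - SL γ UL UR)) • Ustar γ (SL γ UL UR) (Sstar γ UL UR) UL
          + (2 * σ * (SR γ UL UR - Sstar γ UL UR)) • Ustar γ (SR γ UL UR) (Sstar γ UL UR) UR
          + (-(2 * σ * SR γ UL UR)) • UR := by
      unfold Fstar; module
    rw [key]
    exact admG_combo4 (by linarith) (by nlinarith) (by nlinarith) (by nlinarith) (by linarith)
      hL hUsL hUsR hR

/-- Right half-fan brick. -/
lemma brick_right (hγ : 1 < γ) {UL UR : St} (hL : UL ∈ admG) (hR : UR ∈ admG)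
    {σ : ℝ} (hσ : 0 ≤ σ) (hbl : -1 ≤ 2 * σ * SL γ UL UR) (hbr : 2 * σ * SR γ UL UR ≤ 1) :
    UR + (2 * σ) • (Fhllc γ UL UR - eulerF γ UR) ∈ admG := by
  have hLS := SL_lt_Sstar hγ hL hR
  have hRS := Sstar_lt_SR hγ hL hR
  have hUsL := UstarL_mem hγ hL hR
  have hUsR := UstarR_mem hγ hL hR
  rw [Fhllc]
  split_ifs with h1 h2 h3
  · have hFL : eulerF γ UL = Fstar γ (SR γ UL UR) (Sstar γ UL UR) UR
        - Sstar γ UL UR • (Ustar γ (SR γ UL UR) (Sstar γ UL UR) UR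
          - Ustar γ (SL γ UL UR) (Sstar γ UL UR) UL)
        - SL γ UL UR • (Ustar γ (SL γ UL UR) (Sstar γ UL UR) UL - UL) := by
      rw [star_flux_rel' hγ hL hR]; unfold Fstar; module
    rw [hFL]
    have key : UR + (2 * σ) • (Fstar γ (SR γ UL UR) (Sstar γ UL UR) UR
          - Sstar γ UL UR • (Ustar γ (SR γ UL UR) (Sstar γ UL UR) UR
            - Ustar γ (SL γ UL UR) (Sstar γ UL UR) UL)
          - SL γ UL UR • (Ustar γ (SL γ UL UR) (Sstar γ UL UR) UL - UL) - eulerF γ UR) =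
        (2 * σ * SL γ UL UR) • UL
          + (2 * σ * (Sstar γ UL UR - SL γ UL UR)) • Ustar γ (SL γ UL UR) (Sstar γ UL UR) UL
          + (2 * σ * (SR γ UL UR - Sstar γ UL UR)) • Ustar γ (SR γ UL UR) (Sstar γ UL UR) UR
          + (1 - 2 * σ * SR γ UL UR) • UR := by
      unfold Fstar; module
    rw [key]
    exact admG_combo4 (by nlinarith) (by nlinarith) (by nlinarith) (by linarith) (by linarith)
      hL hUsL hUsR hR
  · have hSst0 : 0 ≤ Sstar γ UL UR := h2
    have hFL : Fstar γ (SL γ UL UR) (Sstar γ UL UR) UL = Fstar γ (SR γ UL UR) (Sstar γ UL UR) UR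
        - Sstar γ UL UR • (Ustar γ (SR γ UL UR) (Sstar γ UL UR) UR
          - Ustar γ (SL γ UL UR) (Sstar γ UL UR) UL) := by
      rw [star_flux_rel' hγ hL hR]; module
    rw [hFL]
    have key : UR + (2 * σ) • (Fstar γ (SR γ UL UR) (Sstar γ UL UR) UR
          - Sstar γ UL UR • (Ustar γ (SR γ UL UR) (Sstar γ UL UR) UR
            - Ustar γ (SL γ UL UR) (Sstar γ UL UR) UL) - eulerF γ UR) =
        (2 * σ * Sstar γ UL UR) • Ustar γ (SL γ UL UR) (Sstar γ UL UR) UL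
          + (2 * σ * (SR γ UL UR - Sstar γ UL UR)) • Ustar γ (SR γ UL UR) (Sstar γ UL UR) UR
          + (1 - 2 * σ * SR γ UL UR) • UR := by
      unfold Fstar; module
    rw [key]
    exact admG_combo3 (by nlinarith) (by nlinarith) (by linarith) (by linarith) hUsL hUsR hR
  · have hSR0 : 0 ≤ SR γ UL UR := h3
    have key : UR + (2 * σ) • (Fstar γ (SR γ UL UR) (Sstar γ UL UR) UR - eulerF γ UR) =
        (2 * σ * SR γ UL UR) • Ustar γ (SR γ UL UR) (Sstar γ UL UR) UR
          + (1 - 2 * σ * SR γ UL UR) • UR := by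
      unfold Fstar; module
    rw [key]
    exact admG_combo2 (by nlinarith) (by linarith) (by linarith) hUsR hR
  · simpa using hR

end Lemmas5


set_option maxHeartbeats 1000000

/-- Lemma 3.1: positivity of the homogeneous first-order
well-balanced update with modified HLLC fluxes. -/
theorem first_order_homogeneous_positivity (γ : ℝ) (hγ : 1 < γ)
    (Ujm Uj Ujp : St) (hUjm : Ujm ∈ admG) (hUj : Uj ∈ admG) (hUjp : Ujp ∈ admG)
    (pejm pej pejp : ℝ) (hpejm : 0 < pejm) (hpej : 0 < pej) (hpejp : 0 < pejp)
    (pstl pstr : ℝ) (hpstl : 0 < pstl) (hpstr : 0 < pstr)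
    (Δt h : ℝ) (hΔt : 0 < Δt) (hh : 0 < h)
    (hcfl : Δt / h * ((pstr + pstl) / pej *
        max (alphaMax γ Ujm) (max (alphaMax γ Uj) (alphaMax γ Ujp))) ≤ 1 / 2) :
    Uj - (Δt / h) •
        (Fhllc γ ((pstr / pej) • Uj) ((pstr / pejp) • Ujp)
          - Fhllc γ ((pstl / pejm) • Ujm) ((pstl / pej) • Uj)) ∈ admG := by
  obtain ⟨lam, hlam⟩ : ∃ x, Δt / h = x := ⟨_, rfl⟩
  obtain ⟨cr, hcr⟩ : ∃ x, pstr / pej = x := ⟨_, rfl⟩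
  obtain ⟨cl, hcl⟩ : ∃ x, pstl / pej = x := ⟨_, rfl⟩
  obtain ⟨A, hA⟩ : ∃ x, max (alphaMax γ Ujm) (max (alphaMax γ Uj) (alphaMax γ Ujp)) = x :=
    ⟨_, rfl⟩
  rw [hlam] at hcfl ⊢
  rw [hA] at hcfl
  have hlam0 : 0 < lam := hlam ▸ div_pos hΔt hh
  have hcr0 : 0 < cr := hcr ▸ div_pos hpstr hpej
  have hcl0 : 0 < cl := hcl ▸ div_pos hpstl hpej
  have hA0 : 0 ≤ A := hA ▸ le_trans (alphaMax_nonneg Ujm) (le_max_left _ _)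
  have hAj : alphaMax γ Uj ≤ A := hA ▸ le_trans (le_max_left _ _) (le_max_right _ _)
  have hAjm : alphaMax γ Ujm ≤ A := hA ▸ le_max_left _ _
  have hAjp : alphaMax γ Ujp ≤ A := hA ▸ le_trans (le_max_right _ _) (le_max_right _ _)
  have hsplit : (pstr + pstl) / pej = cr + cl := by rw [add_div, hcr, hcl]
  have hCFL : lam * ((cr + cl) * A) ≤ 1 / 2 := by rw [← hsplit]; exact hcfl
  obtain ⟨σ, hσdef⟩ : ∃ x, lam * (cr + cl) = x := ⟨_, rfl⟩
  have hσ0 : 0 ≤ σ := hσdef ▸ le_of_lt (mul_pos hlam0 (by linarith))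
  have hσA : 2 * σ * A ≤ 1 := by rw [← hσdef]; nlinarith [hCFL]
  -- scaled states
  have hVr : (pstr / pej) • Uj ∈ admG := admG_smul (div_pos hpstr hpej) hUj
  have hWr : (pstr / pejp) • Ujp ∈ admG := admG_smul (div_pos hpstr hpejp) hUjp
  have hWl : (pstl / pejm) • Ujm ∈ admG := admG_smul (div_pos hpstl hpejm) hUjm
  have hVl : (pstl / pej) • Uj ∈ admG := admG_smul (div_pos hpstl hpej) hUj
  have hrj : Uj.1 ≠ 0 := ne_of_gt (rho_pos hUj)
  have hrjm : Ujm.1 ≠ 0 := ne_of_gt (rho_pos hUjm)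
  have hrjp : Ujp.1 ≠ 0 := ne_of_gt (rho_pos hUjp)
  -- wave speed bounds for both interfaces
  have bnd : ∀ (c1 c2 : ℝ) (U1 U2 : St), c1 ≠ 0 → c2 ≠ 0 → U1.1 ≠ 0 → U2.1 ≠ 0 →
      alphaMax γ U1 ≤ A → alphaMax γ U2 ≤ A →
      -A ≤ SL γ (c1 • U1) (c2 • U2) ∧ SR γ (c1 • U1) (c2 • U2) ≤ A := by
    intro c1 c2 U1 U2 hc1 hc2 hU1 hU2 hb1 hb2
    constructor
    · rw [SL, alphaMinus_smul hc1 hU1, alphaMinus_smul hc2 hU2]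
      apply le_min
      · linarith [neg_alphaMax_le_alphaMinus (γ := γ) U1]
      · linarith [neg_alphaMax_le_alphaMinus (γ := γ) U2]
    · rw [SR, alphaPlus_smul hc1 hU1, alphaPlus_smul hc2 hU2]
      apply max_le
      · linarith [alphaPlus_le_alphaMax (γ := γ) U1]
      · linarith [alphaPlus_le_alphaMax (γ := γ) U2]
  obtain ⟨hSLr, hSRr⟩ := bnd (pstr / pej) (pstr / pejp) Uj Ujp (ne_of_gt (div_pos hpstr hpej))
    (ne_of_gt (div_pos hpstr hpejp)) hrj hrjp hAj hAjp
  obtain ⟨hSLl, hSRl⟩ := bnd (pstl / pejm) (pstl / pej) Ujm Uj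
    (ne_of_gt (div_pos hpstl hpejm)) (ne_of_gt (div_pos hpstl hpej)) hrjm hrj hAjm hAj
  -- the three bricks
  have hX : (pstr / pej) • Uj - (2 * σ) • (Fhllc γ ((pstr / pej) • Uj) ((pstr / pejp) • Ujp)
      - eulerF γ ((pstr / pej) • Uj)) ∈ admG := by
    apply brick_left hγ hVr hWr hσ0
    · linarith [mul_le_mul_of_nonneg_left hSLr (by linarith : (0:ℝ) ≤ 2 * σ), hσA]
    · linarith [mul_le_mul_of_nonneg_left hSRr (by linarith : (0:ℝ) ≤ 2 * σ), hσA]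
  have hY : (pstl / pej) • Uj + (2 * σ) • (Fhllc γ ((pstl / pejm) • Ujm) ((pstl / pej) • Uj)
      - eulerF γ ((pstl / pej) • Uj)) ∈ admG := by
    apply brick_right hγ hWl hVl hσ0
    · linarith [mul_le_mul_of_nonneg_left hSLl (by linarith : (0:ℝ) ≤ 2 * σ), hσA]
    · linarith [mul_le_mul_of_nonneg_left hSRl (by linarith : (0:ℝ) ≤ 2 * σ), hσA]
  have hZ : Uj - (2 * lam * (cr - cl)) • eulerF γ Uj ∈ admG := by
    apply admG_transport hγ hUj
    have habs : |2 * lam * (cr - cl)| ≤ 2 * lam * (cr + cl) := by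
      rw [abs_le]
      constructor <;> nlinarith [hlam0, hcr0, hcl0]
    calc |2 * lam * (cr - cl)| * alphaMax γ Uj ≤ 2 * lam * (cr + cl) * A := by
          apply mul_le_mul habs hAj (alphaMax_nonneg Uj)
          nlinarith [hlam0, hcr0, hcl0]
    _ ≤ 1 := by nlinarith [hσA]
  -- the convex decomposition
  have key : Uj - lam • (Fhllc γ ((pstr / pej) • Uj) ((pstr / pejp) • Ujp)
        - Fhllc γ ((pstl / pejm) • Ujm) ((pstl / pej) • Uj)) =
      ((1:ℝ) / (2 * (cr + cl))) • ((pstr / pej) • Uj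
          - (2 * σ) • (Fhllc γ ((pstr / pej) • Uj) ((pstr / pejp) • Ujp)
            - eulerF γ ((pstr / pej) • Uj)))
        + ((1:ℝ) / (2 * (cr + cl))) • ((pstl / pej) • Uj
          + (2 * σ) • (Fhllc γ ((pstl / pejm) • Ujm) ((pstl / pej) • Uj)
            - eulerF γ ((pstl / pej) • Uj)))
        + ((1:ℝ) / 2) • (Uj - (2 * lam * (cr - cl)) • eulerF γ Uj) := by
    rw [eulerF_smul (ne_of_gt (div_pos hpstr hpej)) hrj,
      eulerF_smul (ne_of_gt (div_pos hpstl hpej)) hrj, hcr, hcl, ← hσdef]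
    have hs0 : cr + cl ≠ 0 := by positivity
    match_scalars <;> field_simp <;> ring
  rw [key]
  exact admG_combo3 (by positivity) (by positivity) (by norm_num) (by positivity) hX hY hZ
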